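/- The lumpability cost is bounded above by the predictability cost: C_L(X,W) ≤ C_P(X,W), i.e., H(Y_2|Y_1) − H(Y_2|X_1) ≤ I(X_1;X_2) − I(Y_1;Y_2). -/

import Mathlib

open Filter Real

/-- Shannon entropy (base 2) of a finitely supported probability mass function. -/
noncomputable def ent {A : Type} [Fintype A] (q : A → ℝ) : ℝ :=
  - ∑ a, q a * Real.logb 2 (q a)

/-- Joint law of the first `n+1` samples of a Markov chain with initial distribution `μ`
and transition matrix `P`. -/
noncomputable def chainJoint {X : Type} (μ : X → ℝ) (P : X → X → ℝ) (n : ℕ)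
    (x : Fin (n + 1) → X) : ℝ :=
  μ (x 0) * ∏ i : Fin n, P (x i.castSucc) (x i.succ)

/-- Joint law of `(Y_1, …, Y_{n+1})`, where `Y` is the stationary process obtained by
observing the stationary Markov chain `X ~ (μ, P)` through the channel `W`. -/
noncomputable def obsJoint {X Y : Type} [Fintype X] (μ : X → ℝ) (P : X → X → ℝ)
    (W : X → Y → ℝ) (n : ℕ) (y : Fin (n + 1) → Y) : ℝ :=
  ∑ x : Fin (n + 1) → X, chainJoint μ P n x * ∏ i, W (x i) (y i)

/-- A finite stochastic matrix is irreducible and aperiodic iff it is primitive, i.e., some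
power (and hence all larger powers) of it is entrywise positive. -/
def IrreducibleAperiodic {X : Type} [Fintype X] [DecidableEq X] (P : Matrix X X ℝ) : Prop :=
  ∃ N : ℕ, ∀ n ≥ N, ∀ x x' : X, 0 < (P ^ n) x x'

section Defs

variable {X Y : Type} [Fintype X] [Fintype Y]

/-- Marginal distribution `ν` of each `Y_k`: `νᵀ = μᵀ W`. -/
noncomputable def nuDist (μ : X → ℝ) (W : X → Y → ℝ) : Y → ℝ := fun y => ∑ x, μ x * W x y

/-- Joint distribution of `(Y_1, Y_2)`. -/
noncomputable def jointYY (μ : X → ℝ) (P : X → X → ℝ) (W : X → Y → ℝ) : Y × Y → ℝ :=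
  fun p => ∑ x, ∑ x', μ x * W x p.1 * P x x' * W x' p.2

/-- Joint distribution of `(X_1, Y_2)`. -/
noncomputable def jointX1Y2 (μ : X → ℝ) (P : X → X → ℝ) (W : X → Y → ℝ) : X × Y → ℝ :=
  fun p => ∑ x', μ p.1 * P p.1 x' * W x' p.2

/-- Joint distribution of `(X_2, Y_1)`. -/
noncomputable def jointX2Y1 (μ : X → ℝ) (P : X → X → ℝ) (W : X → Y → ℝ) : X × Y → ℝ :=
  fun p => ∑ x, μ x * W x p.2 * P x p.1

/-- Joint distribution of `(X_1, X_2)`. -/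
noncomputable def jointXX (μ : X → ℝ) (P : X → X → ℝ) : X × X → ℝ :=
  fun p => μ p.1 * P p.1 p.2

/-- Joint distribution of `(X_1, Y_1)`. -/
noncomputable def jointX1Y1 (μ : X → ℝ) (W : X → Y → ℝ) : X × Y → ℝ :=
  fun p => μ p.1 * W p.1 p.2

/-- Joint distribution of `(X_2, Y_2)`. -/
noncomputable def jointX2Y2 (μ : X → ℝ) (P : X → X → ℝ) (W : X → Y → ℝ) : X × Y → ℝ :=
  fun p => ∑ x, μ x * P x p.1 * W p.1 p.2

/-- Joint distribution of `(X_1, X_2, Y_2)`. -/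
noncomputable def jointX1X2Y2 (μ : X → ℝ) (P : X → X → ℝ) (W : X → Y → ℝ) :
    X × X × Y → ℝ :=
  fun p => μ p.1 * P p.1 p.2.1 * W p.2.1 p.2.2

/-- Joint distribution of `(X_1, X_2, Y_1)`. -/
noncomputable def jointX1X2Y1 (μ : X → ℝ) (P : X → X → ℝ) (W : X → Y → ℝ) :
    X × X × Y → ℝ :=
  fun p => μ p.1 * W p.1 p.2.2 * P p.1 p.2.1

/-- Joint distribution of `(X_1, Y_1, Y_2)`. -/
noncomputable def jointX1Y1Y2 (μ : X → ℝ) (P : X → X → ℝ) (W : X → Y → ℝ) :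
    X × Y × Y → ℝ :=
  fun p => ∑ x', μ p.1 * W p.1 p.2.1 * P p.1 x' * W x' p.2.2

/-- Conditional entropy `H(Y_2 | Y_1) = H(Y_1, Y_2) − H(Y_1)`. -/
noncomputable def HY2gY1 (μ : X → ℝ) (P : X → X → ℝ) (W : X → Y → ℝ) : ℝ :=
  ent (jointYY μ P W) - ent (nuDist μ W)

/-- Conditional entropy `H(Y_2 | X_1) = H(X_1, Y_2) − H(X_1)`. -/
noncomputable def HY2gX1 (μ : X → ℝ) (P : X → X → ℝ) (W : X → Y → ℝ) : ℝ :=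
  ent (jointX1Y2 μ P W) - ent μ

/-- Conditional entropy `H(Y_1 | X_2) = H(X_2, Y_1) − H(X_2)`. -/
noncomputable def HY1gX2 (μ : X → ℝ) (P : X → X → ℝ) (W : X → Y → ℝ) : ℝ :=
  ent (jointX2Y1 μ P W) - ent μ

/-- Mutual information `I(X_1; X_2) = H(X_1) + H(X_2) − H(X_1, X_2)` (stationary case). -/
noncomputable def IX1X2 (μ : X → ℝ) (P : X → X → ℝ) : ℝ :=
  2 * ent μ - ent (jointXX μ P)

/-- Mutual information `I(Y_1; Y_2) = H(Y_1) + H(Y_2) − H(Y_1, Y_2)` (stationary case). -/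
noncomputable def IY1Y2 (μ : X → ℝ) (P : X → X → ℝ) (W : X → Y → ℝ) : ℝ :=
  2 * ent (nuDist μ W) - ent (jointYY μ P W)

/-- The lumpability cost `C_L(X, W) = H(Y_2|Y_1) − H(Y_2|X_1)`. -/
noncomputable def CL (μ : X → ℝ) (P : X → X → ℝ) (W : X → Y → ℝ) : ℝ :=
  HY2gY1 μ P W - HY2gX1 μ P W

/-- The predictability cost `C_P(X, W) = I(X_1;X_2) − I(Y_1;Y_2)`. -/
noncomputable def CP (μ : X → ℝ) (P : X → X → ℝ) (W : X → Y → ℝ) : ℝ :=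
  IX1X2 μ P - IY1Y2 μ P W

/-- The aggregation cost `C_β(X, W) = (1−2β)·C_L(X,W) + β·C_P(X,W)`. -/
noncomputable def Cbeta (μ : X → ℝ) (P : X → X → ℝ) (W : X → Y → ℝ) (β : ℝ) : ℝ :=
  (1 - 2 * β) * CL μ P W + β * CP μ P W

/-- `δ_β(X,W) = (1−β)·(H(Y_2|Y_1) − H̄(Y)) + β·(I(X_1;X_2) − H(Y_1) + H̄(Y))`, where `hbarY`
denotes the entropy rate `H̄(Y)`. -/
noncomputable def deltaBeta (μ : X → ℝ) (P : X → X → ℝ) (W : X → Y → ℝ)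
    (hbarY β : ℝ) : ℝ :=
  (1 - β) * (HY2gY1 μ P W - hbarY) + β * (IX1X2 μ P - ent (nuDist μ W) + hbarY)

/-- Conditional mutual information
`I(X_1; X_2 | Y_2) = H(X_1,Y_2) + H(X_2,Y_2) − H(X_1,X_2,Y_2) − H(Y_2)`. -/
noncomputable def IX1X2gY2 (μ : X → ℝ) (P : X → X → ℝ) (W : X → Y → ℝ) : ℝ :=
  ent (jointX1Y2 μ P W) + ent (jointX2Y2 μ P W) - ent (jointX1X2Y2 μ P W) -
    ent (nuDist μ W)

/-- Conditional mutual information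
`I(X_2; X_1 | Y_1) = H(X_1,Y_1) + H(X_2,Y_1) − H(X_1,X_2,Y_1) − H(Y_1)`. -/
noncomputable def IX2X1gY1 (μ : X → ℝ) (P : X → X → ℝ) (W : X → Y → ℝ) : ℝ :=
  ent (jointX1Y1 μ W) + ent (jointX2Y1 μ P W) - ent (jointX1X2Y1 μ P W) -
    ent (nuDist μ W)

/-- Conditional mutual information
`I(Y_2; X_1 | Y_1) = H(X_1,Y_1) + H(Y_1,Y_2) − H(X_1,Y_1,Y_2) − H(Y_1)`. -/
noncomputable def IY2X1gY1 (μ : X → ℝ) (P : X → X → ℝ) (W : X → Y → ℝ) : ℝ :=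
  ent (jointX1Y1 μ W) + ent (jointYY μ P W) - ent (jointX1Y1Y2 μ P W) -
    ent (nuDist μ W)

/-- Mutual information `I(X_2; Y_1) = H(X_2) + H(Y_1) − H(X_2, Y_1)`. -/
noncomputable def IX2Y1 (μ : X → ℝ) (P : X → X → ℝ) (W : X → Y → ℝ) : ℝ :=
  ent μ + ent (nuDist μ W) - ent (jointX2Y1 μ P W)

/-- The deterministic channel induced by an aggregation function `g : X → Y`:
`W_{x→y} = 1` iff `y = g x`. -/
noncomputable def detW [DecidableEq Y] (g : X → Y) : X → Y → ℝ :=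
  fun x y => if g x = y then 1 else 0

/-- The row-stochastic matrix `R = P·W` for a deterministic aggregation `g`:
`R_{x→y} = ∑_{x' : g x' = y} P_{x→x'}`. -/
noncomputable def Rmat [DecidableEq Y] (P : X → X → ℝ) (g : X → Y) : X → Y → ℝ :=
  fun x y => ∑ x', if g x' = y then P x x' else 0

/-- Kullback–Leibler divergence (base 2) between two probability mass functions on `Y`. -/
noncomputable def klDiv2 (p q : Y → ℝ) : ℝ :=
  ∑ y, p y * Real.logb 2 (p y / q y)

end Defs

/-- The lumpability cost is bounded above by the predictability cost:
`C_L(X,W) ≤ C_P(X,W)`, i.e., `H(Y_2|Y_1) − H(Y_2|X_1) ≤ I(X_1;X_2) − I(Y_1;Y_2)`. -/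
theorem CL_le_CP
    {X Y : Type} [Fintype X] [Fintype Y] [Nonempty X] [Nonempty Y] [DecidableEq X]
    (μ : X → ℝ) (P : X → X → ℝ) (W : X → Y → ℝ)
    (hμ0 : ∀ x, 0 ≤ μ x) (hμ1 : ∑ x, μ x = 1)
    (hP0 : ∀ x x', 0 ≤ P x x') (hP1 : ∀ x, ∑ x', P x x' = 1)
    (hinv : ∀ x', ∑ x, μ x * P x x' = μ x')
    (hirr : IrreducibleAperiodic (Matrix.of fun a b => P a b))
    (hW0 : ∀ x y, 0 ≤ W x y) (hW1 : ∀ x, ∑ y, W x y = 1)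
    : CL μ P W ≤ CP μ P W := by
    classical
  have hL2 : (0:ℝ) < Real.log 2 := Real.log_pos (by norm_num)
  set L := Real.log with hLdef
  -- joint pmf of (X1, X2, Y2)
  set q : X → X → Y → ℝ := fun x1 x2 y => μ x1 * P x1 x2 * W x2 y with hqdef
  -- marginal of (X1, Y2)
  set m1y : X → Y → ℝ := fun x1 y => ∑ x', μ x1 * P x1 x' * W x' y with hmdef
  -- marginal of Y2
  set ν : Y → ℝ := fun y => ∑ x, μ x * W x y with hνdef
  -- the comparison pmf
  set s : X → X → Y → ℝ := fun x1 x2 y => m1y x1 y * (μ x2 * W x2 y) / ν y with hsdef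
  have hq0 : ∀ x1 x2 y, 0 ≤ q x1 x2 y := fun x1 x2 y =>
    mul_nonneg (mul_nonneg (hμ0 _) (hP0 _ _)) (hW0 _ _)
  have hm0 : ∀ x1 y, 0 ≤ m1y x1 y := fun x1 y =>
    Finset.sum_nonneg fun _ _ => hq0 _ _ _
  have hν0 : ∀ y, 0 ≤ ν y := fun y =>
    Finset.sum_nonneg fun _ _ => mul_nonneg (hμ0 _) (hW0 _ _)
  have hs0 : ∀ x1 x2 y, 0 ≤ s x1 x2 y := fun x1 x2 y =>
    div_nonneg (mul_nonneg (hm0 _ _) (mul_nonneg (hμ0 _) (hW0 _ _))) (hν0 _)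
  -- pulling a sum over y of W out
  have pull : ∀ (x2 : X) (c : ℝ), (∑ y, W x2 y * c) = c := fun x2 c => by
    rw [← Finset.sum_mul, hW1, one_mul]
  -- total mass of q is 1
  have S1 : (∑ x1, ∑ x2, ∑ y, q x1 x2 y) = 1 := by
    simp only [hqdef]
    simp only [← Finset.mul_sum, hW1, mul_one, hP1, hμ1]
  -- marginalization identities for the four log-terms
  have A12 : (∑ x1, ∑ x2, ∑ y, q x1 x2 y * L (μ x1 * P x1 x2))
      = ∑ x1, ∑ x2, (μ x1 * P x1 x2) * L (μ x1 * P x1 x2) := by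
    refine Finset.sum_congr rfl fun x1 _ => Finset.sum_congr rfl fun x2 _ => ?_
    have h : ∀ y, q x1 x2 y * L (μ x1 * P x1 x2)
        = W x2 y * ((μ x1 * P x1 x2) * L (μ x1 * P x1 x2)) := fun y => by
      simp only [hqdef]; ring
    rw [Finset.sum_congr rfl fun y _ => h y, pull]
  have Aμ : (∑ x1, ∑ x2, ∑ y, q x1 x2 y * L (μ x2)) = ∑ x, μ x * L (μ x) := by
    have step1 : ∀ x1 x2, (∑ y, q x1 x2 y * L (μ x2)) = (μ x1 * P x1 x2) * L (μ x2) := by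
      intro x1 x2
      have h : ∀ y, q x1 x2 y * L (μ x2)
          = W x2 y * ((μ x1 * P x1 x2) * L (μ x2)) := fun y => by
        simp only [hqdef]; ring
      rw [Finset.sum_congr rfl fun y _ => h y, pull]
    rw [Finset.sum_congr rfl fun x1 _ => Finset.sum_congr rfl fun x2 _ => step1 x1 x2]
    rw [Finset.sum_comm]
    refine Finset.sum_congr rfl fun x2 _ => ?_
    have h : ∀ x1, (μ x1 * P x1 x2) * L (μ x2) = (μ x1 * P x1 x2) * L (μ x2) := fun _ => rfl
    rw [← Finset.sum_mul, hinv]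
  have Aν : (∑ x1, ∑ x2, ∑ y, q x1 x2 y * L (ν y)) = ∑ y, ν y * L (ν y) := by
    have swap1 : ∀ x1, (∑ x2, ∑ y, q x1 x2 y * L (ν y)) = ∑ y, ∑ x2, q x1 x2 y * L (ν y) :=
      fun x1 => Finset.sum_comm
    rw [Finset.sum_congr rfl fun x1 _ => swap1 x1, Finset.sum_comm]
    refine Finset.sum_congr rfl fun y _ => ?_
    rw [Finset.sum_comm]
    have step : ∀ x2, (∑ x1, q x1 x2 y * L (ν y)) = μ x2 * W x2 y * L (ν y) := by
      intro x2
      have h : ∀ x1, q x1 x2 y * L (ν y)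
          = (μ x1 * P x1 x2) * (W x2 y * L (ν y)) := fun x1 => by
        simp only [hqdef]; ring
      rw [Finset.sum_congr rfl fun x1 _ => h x1, ← Finset.sum_mul, hinv]
      ring
    rw [Finset.sum_congr rfl fun x2 _ => step x2, ← Finset.sum_mul]
  have Am : (∑ x1, ∑ x2, ∑ y, q x1 x2 y * L (m1y x1 y))
      = ∑ x1, ∑ y, m1y x1 y * L (m1y x1 y) := by
    refine Finset.sum_congr rfl fun x1 _ => ?_
    rw [Finset.sum_comm]
    refine Finset.sum_congr rfl fun y _ => ?_
    rw [← Finset.sum_mul]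
  -- total mass of s is at most 1
  have Ssum : (∑ x1, ∑ x2, ∑ y, s x1 x2 y) ≤ 1 := by
    have swap1 : ∀ x1, (∑ x2, ∑ y, s x1 x2 y) = ∑ y, ∑ x2, s x1 x2 y :=
      fun x1 => Finset.sum_comm
    rw [Finset.sum_congr rfl fun x1 _ => swap1 x1, Finset.sum_comm]
    have hm1sum : ∀ y, (∑ x1, m1y x1 y) = ν y := by
      intro y
      simp only [hmdef, hνdef]
      rw [Finset.sum_comm]
      refine Finset.sum_congr rfl fun x2 _ => ?_
      have h : ∀ x1, μ x1 * P x1 x2 * W x2 y = (μ x1 * P x1 x2) * W x2 y := fun _ => rfl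
      rw [← Finset.sum_mul, hinv]
    have step : ∀ y, (∑ x1, ∑ x2, s x1 x2 y) = ν y * ν y / ν y := by
      intro y
      have inner : ∀ x1, (∑ x2, s x1 x2 y) = m1y x1 y / ν y * ν y := by
        intro x1
        have h : ∀ x2, s x1 x2 y = m1y x1 y / ν y * (μ x2 * W x2 y) := fun x2 => by
          simp only [hsdef]; ring
        rw [Finset.sum_congr rfl fun x2 _ => h x2, ← Finset.mul_sum, hνdef]
      rw [Finset.sum_congr rfl fun x1 _ => inner x1, ← Finset.sum_mul, ← Finset.sum_div,
        hm1sum y]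
      ring
    rw [Finset.sum_congr rfl fun y _ => step y]
    calc (∑ y, ν y * ν y / ν y) ≤ ∑ y, ν y := by
          refine Finset.sum_le_sum fun y _ => ?_
          rcases eq_or_lt_of_le (hν0 y) with h | h
          · rw [← h]; norm_num
          · rw [mul_div_assoc, div_self h.ne', mul_one]
      _ = 1 := by
          simp only [hνdef]
          rw [Finset.sum_comm]
          simp only [← Finset.mul_sum, hW1, mul_one, hμ1]
  -- the pointwise Gibbs inequality
  have Pt : ∀ x1 x2 y, q x1 x2 y - s x1 x2 y
      ≤ q x1 x2 y * (L (μ x1 * P x1 x2) + L (ν y) - L (μ x2) - L (m1y x1 y)) := by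
    intro x1 x2 y
    rcases eq_or_lt_of_le (hq0 x1 x2 y) with hq | hq
    · rw [← hq, zero_mul, zero_sub]
      simpa using hs0 x1 x2 y
    · -- positivity of all ingredients
      have hc : 0 < μ x1 * P x1 x2 := by
        rcases eq_or_lt_of_le (mul_nonneg (hμ0 x1) (hP0 x1 x2)) with h | h
        · exfalso
          have : q x1 x2 y = 0 := by simp only [hqdef]; rw [← h, zero_mul]
          rw [this] at hq; exact lt_irrefl 0 hq
        · exact h
      have hw : 0 < W x2 y := by
        rcases eq_or_lt_of_le (hW0 x2 y) with h | h
        · exfalso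
          have : q x1 x2 y = 0 := by simp only [hqdef]; rw [← h, mul_zero]
          rw [this] at hq; exact lt_irrefl 0 hq
        · exact h
      have hμ2 : 0 < μ x2 := by
        have h1 : μ x1 * P x1 x2 ≤ ∑ x, μ x * P x x2 :=
          Finset.single_le_sum (fun i _ => mul_nonneg (hμ0 i) (hP0 i x2))
            (Finset.mem_univ x1)
        rw [hinv] at h1
        exact lt_of_lt_of_le hc h1
      have hm1 : 0 < m1y x1 y := by
        have h1 : μ x1 * P x1 x2 * W x2 y ≤ ∑ x', μ x1 * P x1 x' * W x' y :=
          Finset.single_le_sum (fun i _ => hq0 x1 i y) (Finset.mem_univ x2)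
        exact lt_of_lt_of_le hq h1
      have hm2y : 0 < μ x2 * W x2 y := mul_pos hμ2 hw
      have hνy : 0 < ν y := by
        have h1 : μ x2 * W x2 y ≤ ∑ x, μ x * W x y :=
          Finset.single_le_sum (fun i _ => mul_nonneg (hμ0 i) (hW0 i y))
            (Finset.mem_univ x2)
        exact lt_of_lt_of_le hm2y h1
      have hs : 0 < s x1 x2 y := div_pos (mul_pos hm1 hm2y) hνy
      -- rewrite the log combination
      have hlogq : L (q x1 x2 y) = L (μ x1 * P x1 x2) + L (W x2 y) := by
        simp only [hqdef, hLdef]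
        exact Real.log_mul hc.ne' hw.ne'
      have hlogs : L (s x1 x2 y) = L (m1y x1 y) + (L (μ x2) + L (W x2 y)) - L (ν y) := by
        simp only [hsdef, hLdef]
        rw [Real.log_div (mul_pos hm1 hm2y).ne' hνy.ne',
          Real.log_mul hm1.ne' hm2y.ne', Real.log_mul hμ2.ne' hw.ne']
      have hcomb : L (μ x1 * P x1 x2) + L (ν y) - L (μ x2) - L (m1y x1 y)
          = L (q x1 x2 y) - L (s x1 x2 y) := by
        rw [hlogq, hlogs]; ring
      rw [hcomb]
      have key := Real.log_le_sub_one_of_pos (div_pos hs hq)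
      rw [Real.log_div hs.ne' hq.ne'] at key
      have key2 : q x1 x2 y * (Real.log (s x1 x2 y) - Real.log (q x1 x2 y))
          ≤ q x1 x2 y * (s x1 x2 y / q x1 x2 y - 1) :=
        mul_le_mul_of_nonneg_left key hq.le
      have hcancel : q x1 x2 y * (s x1 x2 y / q x1 x2 y) = s x1 x2 y :=
        mul_div_cancel₀ _ hq.ne'
      simp only [hLdef]
      nlinarith [key2, hcancel]
  -- summing up
  have Tineq : (∑ x1, ∑ x2, ∑ y, (q x1 x2 y - s x1 x2 y))
      ≤ ∑ x1, ∑ x2, ∑ y,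
        q x1 x2 y * (L (μ x1 * P x1 x2) + L (ν y) - L (μ x2) - L (m1y x1 y)) :=
    Finset.sum_le_sum fun x1 _ => Finset.sum_le_sum fun x2 _ =>
      Finset.sum_le_sum fun y _ => Pt x1 x2 y
  have Tlhs : (∑ x1, ∑ x2, ∑ y, (q x1 x2 y - s x1 x2 y))
      = 1 - ∑ x1, ∑ x2, ∑ y, s x1 x2 y := by
    simp only [Finset.sum_sub_distrib]
    rw [S1]
  have Tsplit : (∑ x1, ∑ x2, ∑ y,
        q x1 x2 y * (L (μ x1 * P x1 x2) + L (ν y) - L (μ x2) - L (m1y x1 y)))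
      = (∑ x1, ∑ x2, (μ x1 * P x1 x2) * L (μ x1 * P x1 x2))
        + (∑ y, ν y * L (ν y)) - (∑ x, μ x * L (μ x))
        - (∑ x1, ∑ y, m1y x1 y * L (m1y x1 y)) := by
    simp only [mul_add, mul_sub, Finset.sum_add_distrib, Finset.sum_sub_distrib]
    rw [A12, Aμ, Aν, Am]
  have Tmain : (∑ x, μ x * L (μ x)) + (∑ x1, ∑ y, m1y x1 y * L (m1y x1 y))
      ≤ (∑ x1, ∑ x2, (μ x1 * P x1 x2) * L (μ x1 * P x1 x2)) + (∑ y, ν y * L (ν y)) := by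
    have h1 : (0:ℝ) ≤ 1 - ∑ x1, ∑ x2, ∑ y, s x1 x2 y := by linarith [Ssum]
    rw [Tlhs, Tsplit] at Tineq
    linarith
  -- translate entropies to natural-log sums
  have entEq : ∀ {A : Type} (inst : Fintype A) (f : A → ℝ),
      ent f = (- ∑ a, f a * Real.log (f a)) / Real.log 2 := by
    intro A inst f
    simp only [ent, Real.logb, ← mul_div_assoc, ← Finset.sum_div, neg_div]
  have e1 : ent μ = (- ∑ x, μ x * L (μ x)) / Real.log 2 := entEq _ μ
  have e2 : ent (nuDist μ W) = (- ∑ y, ν y * L (ν y)) / Real.log 2 := by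
    rw [entEq]
    simp only [nuDist, hνdef, hLdef]
  have e3 : ent (jointXX μ P)
      = (- ∑ x1, ∑ x2, (μ x1 * P x1 x2) * L (μ x1 * P x1 x2)) / Real.log 2 := by
    rw [entEq]
    congr 1
    rw [neg_inj, Fintype.sum_prod_type]
    rfl
  have e4 : ent (jointX1Y2 μ P W)
      = (- ∑ x1, ∑ y, m1y x1 y * L (m1y x1 y)) / Real.log 2 := by
    rw [entEq]
    congr 1
    rw [neg_inj, Fintype.sum_prod_type]
    rfl
  have key : ent (jointXX μ P) + ent (nuDist μ W) ≤ ent μ + ent (jointX1Y2 μ P W) := by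
    rw [e1, e2, e3, e4, ← add_div, ← add_div, div_le_div_iff₀ hL2 hL2]
    nlinarith [Tmain, hL2]
  simp only [CL, CP, HY2gY1, HY2gX1, IX1X2, IY1Y2]
  linarith [key]
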